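/- For all n ≥ 1 and i, j ≥ 0, the coefficients t_{n,i,j} satisfy t_{2n+1,i,j} = t_{2n,i,j} + (2i+2)t_{2n,i+1,j-1} + (j+1)t_{2n,i,j+1} + (2n-2i-j+1)t_{2n,i,j-1} and t_{2n,i,j} = t_{2n-1,i-1,j} + (2i+1)t_{2n-1,i,j-1} + (j+1)t_{2n-1,i-1,j+1} + (2n-2i-j+1)t_{2n-1,i-1,j-1}. -/

import Mathlib

open MvPolynomial Finset

/-- The derivation for the grammar `G = {w → wx, x → yz, y → xz, z → xy}` on `ℚ[w,x,y,z]`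
(`w = X 0`, `x = X 1`, `y = X 2`, `z = X 3`). -/
noncomputable def Dg : Derivation ℚ (MvPolynomial (Fin 4) ℚ) (MvPolynomial (Fin 4) ℚ) :=
  MvPolynomial.mkDerivation ℚ ![X 0 * X 1, X 2 * X 3, X 1 * X 3, X 1 * X 2]

lemma Dg_eq : Dg = (X 0 * X 1 : MvPolynomial (Fin 4) ℚ) • (pderiv 0)
    + (X 2 * X 3 : MvPolynomial (Fin 4) ℚ) • (pderiv 1)
    + (X 1 * X 3 : MvPolynomial (Fin 4) ℚ) • (pderiv 2)
    + (X 1 * X 2 : MvPolynomial (Fin 4) ℚ) • (pderiv 3) := by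
  apply MvPolynomial.derivation_ext
  intro i
  fin_cases i <;> simp [Dg, mkDerivation_X, pderiv_X, Pi.single_apply]

lemma Dg_apply (p : MvPolynomial (Fin 4) ℚ) : Dg p =
    X 0 * (X 1 * pderiv 0 p) + X 2 * (X 3 * pderiv 1 p)
      + X 1 * (X 3 * pderiv 2 p) + X 1 * (X 2 * pderiv 3 p) := by
  rw [Dg_eq]
  show (X 0 * X 1) * pderiv 0 p + (X 2 * X 3) * pderiv 1 p + (X 1 * X 3) * pderiv 2 p
      + (X 1 * X 2) * pderiv 3 p = _
  ring

lemma coeff_pderiv (m : Fin 4 →₀ ℕ) (s : Fin 4) (p : MvPolynomial (Fin 4) ℚ) :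
    coeff m (pderiv s p) = (m s + 1) * coeff (m + Finsupp.single s 1) p := by
  induction p using MvPolynomial.induction_on' with
  | monomial u r =>
    rw [pderiv_monomial]
    by_cases hu : u s = 0
    · have h2 : ¬ (u = m + Finsupp.single s 1) := by
        intro h; apply absurd hu; have := congrArg (fun f => f s) h; simp at this; omega
      simp [coeff_monomial, h2, hu]
    · have hiff : (u - Finsupp.single s 1 = m) ↔ (u = m + Finsupp.single s 1) := by
        constructor <;> intro h <;> ext x <;> have h' := congrArg (fun f => f x) h <;>
          by_cases hx : s = x
        · subst hx; simp [Finsupp.single_apply] at h' ⊢; omega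
        · simp [Finsupp.single_apply, hx] at h' ⊢; omega
        · subst hx; simp [Finsupp.single_apply] at h' ⊢; omega
        · simp [Finsupp.single_apply, hx] at h' ⊢; omega
      by_cases h : u = m + Finsupp.single s 1
      · have h1 : u - Finsupp.single s 1 = m := hiff.2 h
        have h3 : u s = m s + 1 := by
          have := congrArg (fun f => f s) h; simpa using this
        simp [coeff_monomial, h1, h, h3]; ring
      · simp [coeff_monomial, h, hiff.not.2 h]
  | add p q hp hq => simp [hp, hq]; ring

noncomputable def M (a b c d : ℕ) : Fin 4 →₀ ℕ :=
  Finsupp.single 0 a + Finsupp.single 1 b + Finsupp.single 2 c + Finsupp.single 3 d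

@[simp] lemma M_app0 (a b c d : ℕ) : M a b c d 0 = a := by
  simp [M, Finsupp.single_apply]
@[simp] lemma M_app1 (a b c d : ℕ) : M a b c d 1 = b := by
  simp [M, Finsupp.single_apply]
@[simp] lemma M_app2 (a b c d : ℕ) : M a b c d 2 = c := by
  simp [M, Finsupp.single_apply]
@[simp] lemma M_app3 (a b c d : ℕ) : M a b c d 3 = d := by
  simp [M, Finsupp.single_apply]

lemma M_sub0 (a b c d : ℕ) : M a b c d - Finsupp.single 0 1 = M (a-1) b c d := by
  ext x; fin_cases x <;> simp [Finsupp.tsub_apply, M, Finsupp.single_apply]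
lemma M_sub1 (a b c d : ℕ) : M a b c d - Finsupp.single 1 1 = M a (b-1) c d := by
  ext x; fin_cases x <;> simp [Finsupp.tsub_apply, M, Finsupp.single_apply]
lemma M_sub2 (a b c d : ℕ) : M a b c d - Finsupp.single 2 1 = M a b (c-1) d := by
  ext x; fin_cases x <;> simp [Finsupp.tsub_apply, M, Finsupp.single_apply]
lemma M_sub3 (a b c d : ℕ) : M a b c d - Finsupp.single 3 1 = M a b c (d-1) := by
  ext x; fin_cases x <;> simp [Finsupp.tsub_apply, M, Finsupp.single_apply]

lemma M_add0 (a b c d : ℕ) : M a b c d + Finsupp.single 0 1 = M (a+1) b c d := by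
  ext x; fin_cases x <;> simp [M, Finsupp.single_apply]
lemma M_add1 (a b c d : ℕ) : M a b c d + Finsupp.single 1 1 = M a (b+1) c d := by
  ext x; fin_cases x <;> simp [M, Finsupp.single_apply]
lemma M_add2 (a b c d : ℕ) : M a b c d + Finsupp.single 2 1 = M a b (c+1) d := by
  ext x; fin_cases x <;> simp [M, Finsupp.single_apply]
lemma M_add3 (a b c d : ℕ) : M a b c d + Finsupp.single 3 1 = M a b c (d+1) := by
  ext x; fin_cases x <;> simp [M, Finsupp.single_apply]

lemma coeff_X_mul'' (m : Fin 4 →₀ ℕ) (s : Fin 4) (p : MvPolynomial (Fin 4) ℚ) :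
    coeff m (X s * p) = if m s ≠ 0 then coeff (m - Finsupp.single s 1) p else 0 := by
  rw [coeff_X_mul']
  congr 1
  simp [Finsupp.mem_support_iff]

noncomputable def cf (n a b c d : ℕ) : ℚ :=
  coeff (M a b c d) ((fun p => Dg p)^[n] (X 0))

lemma cfD (n a b c d : ℕ) :
    cf (n+1) a b c d =
      (if 1 ≤ a ∧ 1 ≤ b then (a:ℚ) * cf n a (b-1) c d else 0)
      + (if 1 ≤ c ∧ 1 ≤ d then ((b:ℚ)+1) * cf n a (b+1) (c-1) (d-1) else 0)
      + (if 1 ≤ b ∧ 1 ≤ d then ((c:ℚ)+1) * cf n a (b-1) (c+1) (d-1) else 0)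
      + (if 1 ≤ b ∧ 1 ≤ c then ((d:ℚ)+1) * cf n a (b-1) (c-1) (d+1) else 0) := by
  rw [cf, Function.iterate_succ_apply', Dg_apply, coeff_add, coeff_add, coeff_add]
  congr 1
  congr 1
  congr 1
  · -- X 0 * (X 1 * pderiv 0 p)
    rw [coeff_X_mul'', M_app0]
    by_cases ha : a = 0
    · simp [ha]
    rw [if_pos ha, coeff_X_mul'', M_sub0, M_app1]
    by_cases hb : b = 0
    · simp [hb, ha]
    rw [if_pos hb, M_sub1, coeff_pderiv, M_add0, M_app0, if_pos ⟨by omega, by omega⟩]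
    rw [cf]
    have hcast : ((a-1:ℕ):ℚ) + 1 = (a:ℚ) := by
      rw [Nat.cast_sub (by omega)]; ring
    rw [hcast, show a - 1 + 1 = a from by omega]
  · -- X 2 * (X 3 * pderiv 1 p)
    rw [coeff_X_mul'', M_app2]
    by_cases hc : c = 0
    · simp [hc]
    rw [if_pos hc, coeff_X_mul'', M_sub2, M_app3]
    by_cases hd : d = 0
    · simp [hd, hc]
    rw [if_pos hd, M_sub3, coeff_pderiv, M_add1, M_app1, if_pos ⟨by omega, by omega⟩, cf]
  · -- X 1 * (X 3 * pderiv 2 p)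
    rw [coeff_X_mul'', M_app1]
    by_cases hb : b = 0
    · simp [hb]
    rw [if_pos hb, coeff_X_mul'', M_sub1, M_app3]
    by_cases hd : d = 0
    · simp [hd, hb]
    rw [if_pos hd, M_sub3, coeff_pderiv, M_add2, M_app2, if_pos ⟨by omega, by omega⟩, cf]
  · -- X 1 * (X 2 * pderiv 3 p)
    rw [coeff_X_mul'', M_app1]
    by_cases hb : b = 0
    · simp [hb]
    rw [if_pos hb, coeff_X_mul'', M_sub1, M_app2]
    by_cases hc : c = 0
    · simp [hc, hb]
    rw [if_pos hc, M_sub2, coeff_pderiv, M_add3, M_app3, if_pos ⟨by omega, by omega⟩, cf]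

lemma cf_support (n a b c d : ℕ) (h : cf n a b c d ≠ 0) :
    a = 1 ∧ b + c + d = n ∧ b % 2 = n % 2 := by
  induction n generalizing a b c d with
  | zero =>
    rw [cf, Function.iterate_zero_apply, coeff_X'] at h
    have he : Finsupp.single (0 : Fin 4) 1 = M a b c d := by
      by_contra hne; simp [hne] at h
    have h0 := congrArg (fun f => f 0) he
    have h1 := congrArg (fun f => f 1) he
    have h2 := congrArg (fun f => f 2) he
    have h3 := congrArg (fun f => f 3) he
    simp [Finsupp.single_apply] at h0 h1 h2 h3
    omega
  | succ n ih =>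
    rw [cfD] at h
    have : (if 1 ≤ a ∧ 1 ≤ b then (a:ℚ) * cf n a (b-1) c d else 0) ≠ 0
        ∨ (if 1 ≤ c ∧ 1 ≤ d then ((b:ℚ)+1) * cf n a (b+1) (c-1) (d-1) else 0) ≠ 0
        ∨ (if 1 ≤ b ∧ 1 ≤ d then ((c:ℚ)+1) * cf n a (b-1) (c+1) (d-1) else 0) ≠ 0
        ∨ (if 1 ≤ b ∧ 1 ≤ c then ((d:ℚ)+1) * cf n a (b-1) (c-1) (d+1) else 0) ≠ 0 := by
      by_contra hno
      push_neg at hno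
      obtain ⟨e1, e2, e3, e4⟩ := hno
      rw [e1, e2, e3, e4] at h
      simp at h
    rcases this with h' | h' | h' | h'
    · by_cases hcond : 1 ≤ a ∧ 1 ≤ b
      · rw [if_pos hcond] at h'
        obtain ⟨hx, hy⟩ := hcond
        obtain ⟨h1, h2, h3⟩ := ih a (b-1) c d (fun hz => h' (by rw [hz, mul_zero]))
        omega
      · rw [if_neg hcond] at h'; exact absurd rfl h'
    · by_cases hcond : 1 ≤ c ∧ 1 ≤ d
      · rw [if_pos hcond] at h'
        obtain ⟨hx, hy⟩ := hcond
        obtain ⟨h1, h2, h3⟩ := ih a (b+1) (c-1) (d-1) (fun hz => h' (by rw [hz, mul_zero]))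
        omega
      · rw [if_neg hcond] at h'; exact absurd rfl h'
    · by_cases hcond : 1 ≤ b ∧ 1 ≤ d
      · rw [if_pos hcond] at h'
        obtain ⟨hx, hy⟩ := hcond
        obtain ⟨h1, h2, h3⟩ := ih a (b-1) (c+1) (d-1) (fun hz => h' (by rw [hz, mul_zero]))
        omega
      · rw [if_neg hcond] at h'; exact absurd rfl h'
    · by_cases hcond : 1 ≤ b ∧ 1 ≤ c
      · rw [if_pos hcond] at h'
        obtain ⟨hx, hy⟩ := hcond
        obtain ⟨h1, h2, h3⟩ := ih a (b-1) (c-1) (d+1) (fun hz => h' (by rw [hz, mul_zero]))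
        omega
      · rw [if_neg hcond] at h'; exact absurd rfl h'

lemma cf_zero_total (n a b c d : ℕ) (h : b + c + d ≠ n) : cf n a b c d = 0 := by
  by_contra h'
  exact h (cf_support n a b c d h').2.1

lemma core1m (m I J : ℕ) :
    cf (2*m+3) 1 (2*I+1) J (2*m+2-2*I-J) =
      cf (2*m+2) 1 (2*I) J (2*m+2-2*I-J)
      + (2*(I:ℚ)+2) * cf (2*m+2) 1 (2*I+2) (J-1) (2*m+1-2*I-J)
      + ((J:ℚ)+1) * cf (2*m+2) 1 (2*I) (J+1) (2*m+1-2*I-J)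
      + (2*(m:ℚ)+3-2*(I:ℚ)-(J:ℚ)) * cf (2*m+2) 1 (2*I) (J-1) (2*m+3-2*I-J) := by
  rw [show 2*m+3 = (2*m+2)+1 from by omega, cfD]
  rw [show 2*I+1-1 = 2*I from by omega, show 2*I+1+1 = 2*I+2 from by omega,
    show 2*m+2-2*I-J-1 = 2*m+1-2*I-J from by omega]
  congr 1
  congr 1
  congr 1
  · rw [if_pos ⟨le_refl 1, by omega⟩]
    push_cast; ring
  · by_cases hc : 1 ≤ J ∧ 1 ≤ 2*m+2-2*I-J
    · rw [if_pos hc]; push_cast; ring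
    · push_neg at hc
      rw [if_neg (by push_neg; exact hc),
        cf_zero_total (2*m+2) 1 (2*I+2) (J-1) (2*m+1-2*I-J) (by omega), mul_zero]
  · by_cases hc : 1 ≤ 2*I+1 ∧ 1 ≤ 2*m+2-2*I-J
    · rw [if_pos hc]
    · push_neg at hc
      rw [if_neg (by push_neg; exact hc),
        cf_zero_total (2*m+2) 1 (2*I) (J+1) (2*m+1-2*I-J) (by omega), mul_zero]
  · by_cases hJ : 1 ≤ J
    · rw [if_pos ⟨by omega, hJ⟩]
      by_cases hle : 2*I+J ≤ 2*m+2
      · rw [show 2*m+2-2*I-J+1 = 2*m+3-2*I-J from by omega]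
        congr 1
        rw [Nat.cast_sub (by omega), Nat.cast_sub (by omega)]
        push_cast; ring
      · by_cases heq : 2*I+J = 2*m+3
        · have h0 : 2*(m:ℚ)+3-2*(I:ℚ)-(J:ℚ) = 0 := by
            have : ((2*I+J:ℕ):ℚ) = ((2*m+3:ℕ):ℚ) := by rw [heq]
            push_cast at this; linarith
          rw [cf_zero_total (2*m+2) 1 (2*I) (J-1) (2*m+2-2*I-J+1) (by omega), mul_zero,
            h0, zero_mul]
        · rw [cf_zero_total (2*m+2) 1 (2*I) (J-1) (2*m+2-2*I-J+1) (by omega), mul_zero,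
            cf_zero_total (2*m+2) 1 (2*I) (J-1) (2*m+3-2*I-J) (by omega), mul_zero]
    · rw [if_neg (fun h => hJ h.2),
        cf_zero_total (2*m+2) 1 (2*I) (J-1) (2*m+3-2*I-J) (by omega), mul_zero]

lemma core2m (m I J : ℕ) :
    cf (2*m+2) 1 (2*I) J (2*m+2-2*I-J) =
      cf (2*m+1) 1 (2*I-1) J (2*m+2-2*I-J)
      + (2*(I:ℚ)+1) * cf (2*m+1) 1 (2*I+1) (J-1) (2*m+1-2*I-J)
      + ((J:ℚ)+1) * cf (2*m+1) 1 (2*I-1) (J+1) (2*m+1-2*I-J)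
      + (2*(m:ℚ)+3-2*(I:ℚ)-(J:ℚ)) * cf (2*m+1) 1 (2*I-1) (J-1) (2*m+3-2*I-J) := by
  rw [show 2*m+2 = (2*m+1)+1 from by omega, cfD]
  rw [show 2*I+1 = 2*I+1 from rfl,
    show (2*m+1)+1-2*I-J-1 = 2*m+1-2*I-J from by omega,
    show 2*I-1 = 2*I-1 from rfl]
  congr 1
  congr 1
  congr 1
  · by_cases hI : 1 ≤ 2*I
    · rw [if_pos ⟨le_refl 1, hI⟩]; push_cast; ring
    · rw [if_neg (fun h => hI h.2)]
      rw [cf_zero_total (2*m+1) 1 (2*I-1) J ((2*m+1)+1-2*I-J) (by omega)]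
  · by_cases hc : 1 ≤ J ∧ 1 ≤ (2*m+1)+1-2*I-J
    · rw [if_pos hc]; push_cast; ring
    · push_neg at hc
      rw [if_neg (by push_neg; exact hc),
        cf_zero_total (2*m+1) 1 (2*I+1) (J-1) (2*m+1-2*I-J) (by omega), mul_zero]
  · by_cases hc : 1 ≤ 2*I ∧ 1 ≤ (2*m+1)+1-2*I-J
    · rw [if_pos hc]
    · push_neg at hc
      rw [if_neg (by push_neg; exact hc),
        cf_zero_total (2*m+1) 1 (2*I-1) (J+1) (2*m+1-2*I-J) (by omega), mul_zero]
  · by_cases hc : 1 ≤ 2*I ∧ 1 ≤ J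
    · rw [if_pos hc]
      by_cases hle : 2*I+J ≤ 2*m+2
      · rw [show (2*m+1)+1-2*I-J+1 = 2*m+3-2*I-J from by omega]
        congr 1
        rw [Nat.cast_sub (by omega), Nat.cast_sub (by omega)]
        push_cast; ring
      · by_cases heq : 2*I+J = 2*m+3
        · have h0 : 2*(m:ℚ)+3-2*(I:ℚ)-(J:ℚ) = 0 := by
            have : ((2*I+J:ℕ):ℚ) = ((2*m+3:ℕ):ℚ) := by rw [heq]
            push_cast at this; linarith
          rw [cf_zero_total (2*m+1) 1 (2*I-1) (J-1) ((2*m+1)+1-2*I-J+1) (by omega), mul_zero,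
            h0, zero_mul]
        · rw [cf_zero_total (2*m+1) 1 (2*I-1) (J-1) ((2*m+1)+1-2*I-J+1) (by omega), mul_zero,
            cf_zero_total (2*m+1) 1 (2*I-1) (J-1) (2*m+3-2*I-J) (by omega), mul_zero]
    · push_neg at hc
      rw [if_neg (by push_neg; exact hc),
        cf_zero_total (2*m+1) 1 (2*I-1) (J-1) (2*m+3-2*I-J) (by omega), mul_zero]

/-- `tC n i j` is the coefficient `t_{n,i,j}` of `D^n(w)`:
for even `n`, the coefficient of `w x^(2i) y^j z^(n-2i-j)`;
for odd `n`, the coefficient of `w x^(2i+1) y^j z^(n-1-2i-j)`.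
Coefficients with negative indices are `0`. -/
noncomputable def tC (n : ℕ) (i j : ℤ) : ℚ :=
  if 0 ≤ i ∧ 0 ≤ j then
    MvPolynomial.coeff
      (Finsupp.single 0 1
        + Finsupp.single 1 ((if Even n then 2*i else 2*i+1).toNat)
        + Finsupp.single 2 j.toNat
        + Finsupp.single 3 (((n:ℤ) - 2*i - j - if Even n then 0 else 1).toNat))
      ((fun p => Dg p)^[n] (X 0))
  else 0

lemma tC_eq_cf (n : ℕ) (i j : ℤ) (hi : 0 ≤ i) (hj : 0 ≤ j) :
    tC n i j = cf n 1 ((if Even n then 2*i else 2*i+1).toNat) j.toNat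
      (((n:ℤ) - 2*i - j - if Even n then 0 else 1).toNat) := by
  rw [tC, if_pos ⟨hi, hj⟩]
  rfl

lemma tC_neg (n : ℕ) (i j : ℤ) (h : i < 0 ∨ j < 0) : tC n i j = 0 := by
  rw [tC, if_neg (by omega)]

theorem stmt9 (n : ℕ) (hn : 1 ≤ n) (i j : ℤ) (hi : 0 ≤ i) (hj : 0 ≤ j) :
    tC (2*n+1) i j =
      tC (2*n) i j + (2*(i:ℚ)+2) * tC (2*n) (i+1) (j-1) + ((j:ℚ)+1) * tC (2*n) i (j+1)
        + (2*(n:ℚ)-2*(i:ℚ)-(j:ℚ)+1) * tC (2*n) i (j-1) ∧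
    tC (2*n) i j =
      tC (2*n-1) (i-1) j + (2*(i:ℚ)+1) * tC (2*n-1) i (j-1)
        + ((j:ℚ)+1) * tC (2*n-1) (i-1) (j+1)
        + (2*(n:ℚ)-2*(i:ℚ)-(j:ℚ)+1) * tC (2*n-1) (i-1) (j-1) := by
  lift i to ℕ using hi with I
  lift j to ℕ using hj with J
  obtain ⟨m, rfl⟩ : ∃ m, n = m + 1 := ⟨n - 1, by omega⟩
  have hoddm3 : ¬ Even (2*(m+1)+1) := by simp [Nat.even_add_one, parity_simps]
  have hevm2 : Even (2*(m+1)) := even_two_mul _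
  have hoddm1 : ¬ Even (2*(m+1)-1) := by
    rw [show 2*(m+1)-1 = 2*m+1 from by omega]; simp [Nat.even_add_one, parity_simps]
  constructor
  · -- part 1
    have hA : tC (2*(m+1)+1) (I:ℤ) (J:ℤ) = cf (2*m+3) 1 (2*I+1) J (2*m+2-2*I-J) := by
      rw [tC_eq_cf _ _ _ (by positivity) (by positivity), if_neg hoddm3, if_neg hoddm3]
      congr 1 <;> omega
    have hB1 : tC (2*(m+1)) (I:ℤ) (J:ℤ) = cf (2*m+2) 1 (2*I) J (2*m+2-2*I-J) := by
      rw [tC_eq_cf _ _ _ (by positivity) (by positivity), if_pos hevm2, if_pos hevm2]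
      congr 1 <;> omega
    have hB2 : tC (2*(m+1)) ((I:ℤ)+1) ((J:ℤ)-1) = cf (2*m+2) 1 (2*I+2) (J-1) (2*m+1-2*I-J) := by
      by_cases hJ : J = 0
      · rw [tC_neg _ _ _ (by omega),
          cf_zero_total (2*m+2) 1 (2*I+2) (J-1) (2*m+1-2*I-J) (by omega)]
      · rw [tC_eq_cf _ _ _ (by omega) (by omega), if_pos hevm2, if_pos hevm2]
        congr 1 <;> omega
    have hB3 : tC (2*(m+1)) (I:ℤ) ((J:ℤ)+1) = cf (2*m+2) 1 (2*I) (J+1) (2*m+1-2*I-J) := by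
      rw [tC_eq_cf _ _ _ (by omega) (by omega), if_pos hevm2, if_pos hevm2]
      congr 1 <;> omega
    have hB4 : tC (2*(m+1)) (I:ℤ) ((J:ℤ)-1) = cf (2*m+2) 1 (2*I) (J-1) (2*m+3-2*I-J) := by
      by_cases hJ : J = 0
      · rw [tC_neg _ _ _ (by omega),
          cf_zero_total (2*m+2) 1 (2*I) (J-1) (2*m+3-2*I-J) (by omega)]
      · rw [tC_eq_cf _ _ _ (by omega) (by omega), if_pos hevm2, if_pos hevm2]
        congr 1 <;> omega
    rw [hA, hB1, hB2, hB3, hB4]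
    push_cast
    linear_combination core1m m I J
  · -- part 2
    have hC : tC (2*(m+1)) (I:ℤ) (J:ℤ) = cf (2*m+2) 1 (2*I) J (2*m+2-2*I-J) := by
      rw [tC_eq_cf _ _ _ (by positivity) (by positivity), if_pos hevm2, if_pos hevm2]
      congr 1 <;> omega
    have hD1 : tC (2*(m+1)-1) ((I:ℤ)-1) (J:ℤ) = cf (2*m+1) 1 (2*I-1) J (2*m+2-2*I-J) := by
      by_cases hI : I = 0
      · rw [tC_neg _ _ _ (by omega),
          cf_zero_total (2*m+1) 1 (2*I-1) J (2*m+2-2*I-J) (by omega)]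
      · rw [tC_eq_cf _ _ _ (by omega) (by omega), if_neg hoddm1, if_neg hoddm1]
        congr 1 <;> omega
    have hD2 : tC (2*(m+1)-1) (I:ℤ) ((J:ℤ)-1) = cf (2*m+1) 1 (2*I+1) (J-1) (2*m+1-2*I-J) := by
      by_cases hJ : J = 0
      · rw [tC_neg _ _ _ (by omega),
          cf_zero_total (2*m+1) 1 (2*I+1) (J-1) (2*m+1-2*I-J) (by omega)]
      · rw [tC_eq_cf _ _ _ (by omega) (by omega), if_neg hoddm1, if_neg hoddm1]
        congr 1 <;> omega
    have hD3 : tC (2*(m+1)-1) ((I:ℤ)-1) ((J:ℤ)+1) = cf (2*m+1) 1 (2*I-1) (J+1) (2*m+1-2*I-J) := by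
      by_cases hI : I = 0
      · rw [tC_neg _ _ _ (by omega),
          cf_zero_total (2*m+1) 1 (2*I-1) (J+1) (2*m+1-2*I-J) (by omega)]
      · rw [tC_eq_cf _ _ _ (by omega) (by omega), if_neg hoddm1, if_neg hoddm1]
        congr 1 <;> omega
    have hD4 : tC (2*(m+1)-1) ((I:ℤ)-1) ((J:ℤ)-1) = cf (2*m+1) 1 (2*I-1) (J-1) (2*m+3-2*I-J) := by
      by_cases hIJ : I = 0 ∨ J = 0
      · rw [tC_neg _ _ _ (by omega),
          cf_zero_total (2*m+1) 1 (2*I-1) (J-1) (2*m+3-2*I-J) (by omega)]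
      · push_neg at hIJ
        rw [tC_eq_cf _ _ _ (by omega) (by omega), if_neg hoddm1, if_neg hoddm1]
        congr 1 <;> omega
    rw [hC, hD1, hD2, hD3, hD4]
    push_cast
    linear_combination core2m m I J
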